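/- Let G be a (claw, co-claw)-free graph containing a triangle T and an independent set C of size 3 that share exactly one vertex. Then T ∪ C induces a bull in G. -/

import Mathlib

open SimpleGraph

/-- `H` occurs as an induced subgraph of `G`. -/
def HasInducedCopy {V W : Type*} (G : SimpleGraph V) (H : SimpleGraph W) : Prop :=
  ∃ f : W ↪ V, ∀ a b, H.Adj a b ↔ G.Adj (f a) (f b)

/-- The graph on `Fin n` with the given edge list. -/
def listGraph (n : ℕ) (l : List (Fin n × Fin n)) : SimpleGraph (Fin n) :=
  SimpleGraph.fromRel (fun a b => (a, b) ∈ l)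

/-- The claw `K_{1,3}`. -/
def clawGraph : SimpleGraph (Fin 4) := listGraph 4 [(0,1),(0,2),(0,3)]

/-- The co-claw: the complement of the claw (a triangle plus an isolated vertex). -/
def coclawGraph : SimpleGraph (Fin 4) := clawGraphᶜ

/-- The net: a triangle `0,1,2` with pendant vertices `3,4,5`, where `3+i` is
adjacent exactly to `i`. -/
def netGraph : SimpleGraph (Fin 6) := listGraph 6 [(0,1),(0,2),(1,2),(0,3),(1,4),(2,5)]

/-- The 3-sun: the complement of the net. -/
def sunGraph : SimpleGraph (Fin 6) := netGraphᶜ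

/-- The bull: a triangle `0,1,2` with pendant vertices `3` (adjacent to `0`)
and `4` (adjacent to `1`). -/
def bullGraph : SimpleGraph (Fin 5) := listGraph 5 [(0,1),(0,2),(1,2),(0,3),(1,4)]

/-- `{a, b, c}` is an asteroidal triple of `G`: an independent set of three
vertices such that any two of them are joined by a path avoiding the closed
neighbourhood of the third. -/
def IsAT {V : Type*} (G : SimpleGraph V) (a b c : V) : Prop :=
  a ≠ b ∧ a ≠ c ∧ b ≠ c ∧ ¬G.Adj a b ∧ ¬G.Adj a c ∧ ¬G.Adj b c ∧
  (∃ p : G.Walk a b, ∀ x ∈ p.support, x ≠ c ∧ ¬G.Adj c x) ∧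
  (∃ p : G.Walk a c, ∀ x ∈ p.support, x ≠ b ∧ ¬G.Adj b x) ∧
  (∃ p : G.Walk b c, ∀ x ∈ p.support, x ≠ a ∧ ¬G.Adj a x)

/-- A graph is AT-free if it contains no asteroidal triple. -/
def ATFree {V : Type*} (G : SimpleGraph V) : Prop := ∀ a b c : V, ¬ IsAT G a b c

/-- A unit interval graph: vertices are unit intervals `[f v, f v + 1]` on the
real line, and distinct vertices are adjacent iff their intervals intersect. -/
def IsUnitIntervalGraph {V : Type*} (G : SimpleGraph V) : Prop :=
  ∃ f : V → ℝ, ∀ u v : V, G.Adj u v ↔ u ≠ v ∧ |f u - f v| ≤ 1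


lemma claw_aux {V : Type*} (G : SimpleGraph V)
    (x p q r : V) (hxp : G.Adj x p) (hxq : G.Adj x q) (hxr : G.Adj x r)
    (hpq : ¬G.Adj p q) (hpr : ¬G.Adj p r) (hqr : ¬G.Adj q r)
    (hpq' : p ≠ q) (hpr' : p ≠ r) (hqr' : q ≠ r) :
    HasInducedCopy G clawGraph := by
  refine ⟨⟨![x, p, q, r], ?_⟩, ?_⟩
  · intro i j h
    fin_cases i <;> fin_cases j <;> simp_all [hxp.ne, hxq.ne, hxr.ne, eq_comm]
  · intro i j
    change _ ↔ G.Adj (![x, p, q, r] i) (![x, p, q, r] j)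
    fin_cases i <;> fin_cases j <;>
      simp [clawGraph, listGraph, fromRel_adj, hxp, hxq, hxr, hpq, hpr, hqr,
        hxp.symm, hxq.symm, hxr.symm, G.irrefl, G.adj_comm]

lemma coclaw_aux {V : Type*} (G : SimpleGraph V)
    (w x y z : V) (hxy : G.Adj x y) (hxz : G.Adj x z) (hyz : G.Adj y z)
    (hwx : ¬G.Adj w x) (hwy : ¬G.Adj w y) (hwz : ¬G.Adj w z)
    (hwx' : w ≠ x) (hwy' : w ≠ y) (hwz' : w ≠ z) :
    HasInducedCopy G coclawGraph := by
  refine ⟨⟨![w, x, y, z], ?_⟩, ?_⟩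
  · intro i j h
    fin_cases i <;> fin_cases j <;> simp_all [hxy.ne, hxz.ne, hyz.ne, eq_comm]
  · intro i j
    change _ ↔ G.Adj (![w, x, y, z] i) (![w, x, y, z] j)
    fin_cases i <;> fin_cases j <;>
      simp [coclawGraph, clawGraph, listGraph, fromRel_adj, compl_adj,
        hxy, hxz, hyz, hwx, hwy, hwz, hxy.symm, hxz.symm, hyz.symm,
        hwx', hwy', hwz', hwx'.symm, hwy'.symm, hwz'.symm, G.irrefl, G.adj_comm]

lemma bull_aux {V : Type*} (G : SimpleGraph V)
    (x y z u v : V)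
    (hxy : G.Adj x y) (hxz : G.Adj x z) (hyz : G.Adj y z)
    (hxu : G.Adj x u) (hyv : G.Adj y v)
    (hzu : ¬G.Adj z u) (hzv : ¬G.Adj z v) (hyu : ¬G.Adj y u)
    (hxv : ¬G.Adj x v) (huv : ¬G.Adj u v)
    (hzu' : z ≠ u) (hzv' : z ≠ v) (hyu' : y ≠ u) (hxv' : x ≠ v) (huv' : u ≠ v) :
    ∃ f : Fin 5 ↪ V, (∀ i j, bullGraph.Adj i j ↔ G.Adj (f i) (f j)) ∧
      Set.range f = {x, y, z, u, v} := by
  refine ⟨⟨![x, y, z, u, v], ?_⟩, ?_, ?_⟩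
  · intro i j h
    fin_cases i <;> fin_cases j <;>
      simp_all [hxy.ne, hxz.ne, hyz.ne, hxu.ne, hyv.ne, eq_comm]
  · intro i j
    change _ ↔ G.Adj (![x, y, z, u, v] i) (![x, y, z, u, v] j)
    fin_cases i <;> fin_cases j <;>
      simp [bullGraph, listGraph, fromRel_adj, hxy, hxz, hyz, hxu, hyv,
        hzu, hzv, hyu, hxv, huv, hxy.symm, hxz.symm, hyz.symm, hxu.symm, hyv.symm,
        G.irrefl, G.adj_comm]
  · ext w
    simp [Set.range, Fin.exists_fin_succ, Matrix.cons_val_zero, Matrix.cons_val_succ]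
    tauto

/-- In a (claw, co-claw)-free graph, a triangle `T = {a,b,c}` and an
independent set `C = {a,s,t}` of size 3 sharing exactly the vertex `a`
together induce a bull. -/
theorem triangle_cotriangle_bull {V : Type*} (G : SimpleGraph V)
    (hclaw : ¬ HasInducedCopy G clawGraph)
    (hcoclaw : ¬ HasInducedCopy G coclawGraph)
    (a b c s t : V)
    (hab : G.Adj a b) (hac : G.Adj a c) (hbc : G.Adj b c)
    (has : a ≠ s) (hat : a ≠ t) (hst : s ≠ t)
    (hnas : ¬G.Adj a s) (hnat : ¬G.Adj a t) (hnst : ¬G.Adj s t)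
    (hsb : s ≠ b) (hsc : s ≠ c) (htb : t ≠ b) (htc : t ≠ c) :
    ∃ f : Fin 5 ↪ V, (∀ u v, bullGraph.Adj u v ↔ G.Adj (f u) (f v)) ∧
      Set.range f = {a, b, c, s, t} := by
  
  have hs : G.Adj s b ∨ G.Adj s c := by
    by_contra h
    push_neg at h
    exact hcoclaw (coclaw_aux G s a b c hab hac hbc
      (fun h' => hnas (G.adj_symm h')) h.1 h.2 has.symm hsb hsc)
  have ht : G.Adj t b ∨ G.Adj t c := by
    by_contra h
    push_neg at h
    exact hcoclaw (coclaw_aux G t a b c hab hac hbc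
      (fun h' => hnat (G.adj_symm h')) h.1 h.2 hat.symm htb htc)
  have hb : ¬(G.Adj s b ∧ G.Adj t b) := fun ⟨h1, h2⟩ =>
    hclaw (claw_aux G b a s t hab.symm h1.symm h2.symm hnas hnat hnst has hat hst)
  have hc : ¬(G.Adj s c ∧ G.Adj t c) := fun ⟨h1, h2⟩ =>
    hclaw (claw_aux G c a s t hac.symm h1.symm h2.symm hnas hnat hnst has hat hst)
  rcases hs with hsb' | hsc'
  · have htb' : ¬G.Adj t b := fun h => hb ⟨hsb', h⟩
    have htc' : G.Adj t c := ht.resolve_left htb'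
    have hsc' : ¬G.Adj s c := fun h => hc ⟨h, htc'⟩
    obtain ⟨f, h1, h2⟩ := bull_aux G b c a s t hbc hab.symm hac.symm hsb'.symm htc'.symm
      hnas hnat (fun h => hsc' (G.adj_symm h)) (fun h => htb' (G.adj_symm h)) hnst
      has hat hsc.symm htb.symm hst
    refine ⟨f, h1, ?_⟩
    rw [h2]; ext w; simp; tauto
  · have htc' : ¬G.Adj t c := fun h => hc ⟨hsc', h⟩
    have htb' : G.Adj t b := ht.resolve_right htc'
    have hsb' : ¬G.Adj s b := fun h => hb ⟨h, htb'⟩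
    obtain ⟨f, h1, h2⟩ := bull_aux G b c a t s hbc hab.symm hac.symm htb'.symm hsc'.symm
      hnat hnas (fun h => htc' (G.adj_symm h)) (fun h => hsb' (G.adj_symm h)) (fun h => hnst (G.adj_symm h))
      hat has htc.symm hsb.symm hst.symm
    refine ⟨f, h1, ?_⟩
    rw [h2]; ext w; simp; tauto
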